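/- In the Cohen forcing P_{κ,θ} (partial functions θ → κ of size < κ, κ regular uncountable) with generic function f*: for any μ < κ suitable pairs (x_i, δ_i)_{i<μ} — where x_i is an antichain of size ≤ κ labeled with ordinals < κ and δ_i ∈ θ exceeds sup of supports of all conditions in the antichain of x_i — the conditions b_{x_i,δ_i} = ⟦f*(δ_i) > x_i⟧ have a common nonzero lower bound; hence the collection of all such b_{x,δ} generates a κ-complete filter on the completion B_{κ,θ}. -/

import Mathlib

universe u

/- In the Cohen forcing P_{κ,θ} (partial functions θ → κ with domain of size < κ,
   κ regular uncountable — strongly compact in the paper —, θ > κ) with generic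
   function f*: for any μ < κ many suitable pairs (x_i, δ_i) — where x_i is a
   P_{κ,θ}-name for an ordinal < κ given by an antichain of size ≤ κ labeled with
   ordinals < κ which is a maximal antichain (predense), and δ_i < θ exceeds the
   supports of all conditions of that antichain — the Boolean values
   b_{x_i,δ_i} = ⟦f*(δ_i) > x_i⟧ have a common nonzero lower bound; hence the
   collection of all such b_{x,δ} generates a κ-complete filter on B_{κ,θ}.
   We express the common lower bound concretely as a condition q which, for each
   i, extends some member a of the antichain of x_i (thus deciding x_i to be its
   label) and satisfies q(δ_i) > label(a); such a q satisfies q ≤ b_{x_i,δ_i}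
   for every i. -/

/-- A condition of `P_{κ,θ}`: a partial function from `θ` to `κ` with support of
size `< κ` (coordinates are ordinals `< θ`, values ordinals `< κ.ord`). -/
def CohenCond (κ : Cardinal.{u}) (θ : Ordinal.{u}) : Type (u + 1) :=
  {p : Ordinal.{u} → Option Ordinal.{u} //
    (∀ δ, p δ ≠ none → δ < θ) ∧
    Cardinal.mk {δ : Ordinal.{u} | p δ ≠ none} < Cardinal.lift.{u + 1} κ ∧
    ∀ δ o, p δ = some o → o < κ.ord}

/-- `q` extends `p` (i.e. `q ≤ p` in the Cohen forcing). -/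
def CohenExt {κ : Cardinal.{u}} {θ : Ordinal.{u}}
    (q p : CohenCond κ θ) : Prop :=
  ∀ δ o, p.1 δ = some o → q.1 δ = some o

noncomputable section CohenAux

open Cardinal Ordinal Classical

variable {κ : Cardinal.{u}} {θ : Ordinal.{u}}

theorem liftRegular (hreg : κ.IsRegular) : (Cardinal.lift.{u + 1} κ).IsRegular := by
  constructor
  · rw [← Cardinal.lift_aleph0.{u + 1, u}]
    exact Cardinal.lift_le.2 hreg.1
  · rw [← Cardinal.lift_ord, ← Ordinal.lift_cof]
    exact Cardinal.lift_le.2 hreg.2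

theorem ordPos (hreg : κ.IsRegular) : 0 < κ.ord := by
  have : (0 : Cardinal.{u}) < κ := lt_of_lt_of_le Cardinal.aleph0_pos hreg.1
  have h := Cardinal.ord_lt_ord.2 this
  rwa [Cardinal.ord_zero] at h

/-- truncation to stay below `κ.ord`. -/
def clip (κ : Cardinal.{u}) (o : Ordinal.{u}) : Ordinal.{u} :=
  if o < κ.ord then o else 0

theorem clip_lt (h : 0 < κ.ord) (o : Ordinal.{u}) : clip κ o < κ.ord := by
  unfold clip; split_ifs with h1
  · exact h1
  · exact h

theorem clip_eq {o : Ordinal.{u}} (h : o < κ.ord) : clip κ o = o := if_pos h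

/-- the empty condition. -/
def emptyCond (hκ : Cardinal.aleph0 ≤ κ) : CohenCond κ θ := by
  refine ⟨fun _ => none, fun δ h => absurd rfl h, ?_, fun δ o h => nomatch h⟩
  have h0 : {δ : Ordinal.{u} | (none : Option Ordinal.{u}) ≠ none} = ∅ := by simp
  rw [h0, Cardinal.mk_emptyCollection]
  have h1 : (0 : Cardinal.{u}) < κ := lt_of_lt_of_le Cardinal.aleph0_pos hκ
  have h2 : Cardinal.lift.{u + 1} (0 : Cardinal.{u}) < Cardinal.lift.{u + 1} κ :=
    Cardinal.lift_lt.2 h1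
  rwa [Cardinal.lift_zero] at h2

open Classical in
/-- the raw union function: assigned coordinates get `V γ`, others get the value of
some condition in the family defined there. -/
def bigFun {ι' : Type u} (g : ι' → CohenCond κ θ) (D : ι' → Ordinal.{u})
    (V : Ordinal.{u} → Ordinal.{u}) (γ : Ordinal.{u}) : Option Ordinal.{u} :=
  if _ : ∃ k, D k = γ then some (V γ)
  else if h2 : ∃ j, (g j).1 γ ≠ none then (g h2.choose).1 γ else none

theorem bigFun_assigned {ι' : Type u} (g : ι' → CohenCond κ θ) (D : ι' → Ordinal.{u})
    (V : Ordinal.{u} → Ordinal.{u}) {γ : Ordinal.{u}} (h : ∃ k, D k = γ) :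
    bigFun g D V γ = some (V γ) := by
  rw [bigFun, dif_pos h]

theorem bigFun_of_g {ι' : Type u} (g : ι' → CohenCond κ θ) (D : ι' → Ordinal.{u})
    (V : Ordinal.{u} → Ordinal.{u}) {γ : Ordinal.{u}} (h1 : ¬∃ k, D k = γ)
    (h2 : ∃ j, (g j).1 γ ≠ none) :
    bigFun g D V γ = (g h2.choose).1 γ := by
  rw [bigFun, dif_neg h1, dif_pos h2]

/-- `bigFun` as a condition. -/
def bigCond (hreg : κ.IsRegular) {ι' : Type u} (hι' : Cardinal.mk ι' < κ)
    (g : ι' → CohenCond κ θ) (D : ι' → Ordinal.{u}) (hD : ∀ k, D k < θ)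
    (V : Ordinal.{u} → Ordinal.{u}) (hV : ∀ γ, V γ < κ.ord) : CohenCond κ θ := by
  refine ⟨bigFun g D V, ?_, ?_, ?_⟩
  · intro γ hγ
    unfold bigFun at hγ
    split_ifs at hγ with h1 h2
    · obtain ⟨k, hk⟩ := h1
      exact hk ▸ hD k
    · exact (g h2.choose).2.1 γ hγ
    · exact absurd rfl hγ
  · have hsub : {γ : Ordinal.{u} | bigFun g D V γ ≠ none} ⊆
        Set.range D ∪ ⋃ j : ι', {γ | (g j).1 γ ≠ none} := by
      intro γ hγ
      simp only [Set.mem_setOf_eq] at hγ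
      unfold bigFun at hγ
      split_ifs at hγ with h1 h2
      · exact Or.inl h1
      · exact Or.inr (Set.mem_iUnion.2 ⟨h2.choose, hγ⟩)
      · exact absurd rfl hγ
    have hl := liftRegular (κ := κ) hreg
    refine lt_of_le_of_lt (Cardinal.mk_le_mk_of_subset hsub) ?_
    refine lt_of_le_of_lt (Cardinal.mk_union_le _ _) ?_
    refine Cardinal.add_lt_of_lt hl.1 ?_ ?_
    · have hr : Set.range D = Set.range fun j : ULift.{u + 1} ι' => D j.down := by
        ext γ
        constructor
        · rintro ⟨j, rfl⟩; exact ⟨⟨j⟩, rfl⟩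
        · rintro ⟨j, rfl⟩; exact ⟨j.down, rfl⟩
      rw [hr]
      refine lt_of_le_of_lt (Cardinal.mk_range_le) ?_
      rw [Cardinal.mk_uLift]
      exact Cardinal.lift_lt.2 hι'
    · have he : (⋃ j : ι', {γ : Ordinal.{u} | (g j).1 γ ≠ none}) =
          ⋃ j : ULift.{u + 1} ι', {γ : Ordinal.{u} | (g j.down).1 γ ≠ none} := by
        ext γ
        simp only [Set.mem_iUnion]
        exact ⟨fun ⟨j, h⟩ => ⟨⟨j⟩, h⟩, fun ⟨j, h⟩ => ⟨j.down, h⟩⟩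
      rw [he]
      refine lt_of_le_of_lt (Cardinal.mk_iUnion_le _) ?_
      refine Cardinal.mul_lt_of_lt hl.1 ?_ ?_
      · rw [Cardinal.mk_uLift]
        exact Cardinal.lift_lt.2 hι'
      · exact Cardinal.iSup_lt_of_isRegular hl
          (by rw [Cardinal.mk_uLift]; exact Cardinal.lift_lt.2 hι')
          fun j => (g j.down).2.2.1
  · intro γ o ho
    unfold bigFun at ho
    split_ifs at ho with h1 h2
    · exact (Option.some.inj ho) ▸ hV γ
    · exact (g h2.choose).2.2.2 γ o ho

/-- the supremum of the (successors of the) labels over indices satisfying `p`. -/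
def Wsup {ι : Type u} (lab : ι → CohenCond κ θ → Ordinal.{u})
    (b : ι → CohenCond κ θ) (p : ι → Prop) : Ordinal.{u} :=
  ⨆ k : Subtype p, (lab k.1 (b k.1) + 1)

theorem Wsup_congr {ι : Type u} (lab : ι → CohenCond κ θ → Ordinal.{u})
    {b b' : ι → CohenCond κ θ} (p : ι → Prop) (h : ∀ k, p k → b k = b' k) :
    Wsup lab b p = Wsup lab b' p := by
  unfold Wsup
  congr 1
  funext k
  rw [h k.1 k.2]

/-- the order in which we process the indices: primarily by the value of `δ`,
secondarily by a fixed well-ordering. -/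
def Rrel {ι : Type u} (δ : ι → Ordinal.{u}) : ι → ι → Prop :=
  InvImage (Prod.Lex (· < ·) WellOrderingRel) fun i => (δ i, i)

theorem Rrel_wf {ι : Type u} (δ : ι → Ordinal.{u}) : WellFounded (Rrel δ) :=
  InvImage.wf _ (WellFounded.prod_lex Ordinal.lt_wf IsWellFounded.wf)

theorem Rrel_of_lt {ι : Type u} {δ : ι → Ordinal.{u}} {i j : ι} (h : δ i < δ j) :
    Rrel δ i j := Prod.Lex.left _ _ h

theorem Rrel_total {ι : Type u} (δ : ι → Ordinal.{u}) (i j : ι) (h : i ≠ j) :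
    Rrel δ i j ∨ Rrel δ j i := by
  rcases lt_trichotomy (δ i) (δ j) with h1 | h1 | h1
  · exact Or.inl (Rrel_of_lt h1)
  · rcases trichotomous_of WellOrderingRel i j with h2 | h2 | h2
    · left
      show Prod.Lex (· < ·) WellOrderingRel (δ i, i) (δ j, j)
      rw [h1]
      exact Prod.Lex.right _ h2
    · exact absurd h2 h
    · right
      show Prod.Lex (· < ·) WellOrderingRel (δ j, j) (δ i, i)
      rw [h1]
      exact Prod.Lex.right _ h2
  · exact Or.inr (Rrel_of_lt h1)

/-- the condition collecting everything chosen before stage `i`, together with the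
assignments at the coordinates `δ k`, `k` before `i`. -/
def Pcond (hreg : κ.IsRegular) {ι : Type u} (hι : Cardinal.mk ι < κ)
    (lab : ι → CohenCond κ θ → Ordinal.{u}) (δ : ι → Ordinal.{u}) (hδθ : ∀ i, δ i < θ)
    (i : ι) (b : ι → CohenCond κ θ) : CohenCond κ θ :=
  bigCond hreg ((Cardinal.mk_subtype_le _).trans_lt hι)
    (fun j : {j // Rrel δ j i} => b j.1) (fun j : {j // Rrel δ j i} => δ j.1)
    (fun j => hδθ j.1)
    (fun γ => clip κ (Wsup lab b fun k => Rrel δ k i ∧ δ k = γ))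
    (fun _ => clip_lt (ordPos hreg) _)

theorem Pcond_congr (hreg : κ.IsRegular) {ι : Type u} (hι : Cardinal.mk ι < κ)
    (lab : ι → CohenCond κ θ → Ordinal.{u}) (δ : ι → Ordinal.{u}) (hδθ : ∀ i, δ i < θ)
    (i : ι) {b b' : ι → CohenCond κ θ} (h : ∀ j, Rrel δ j i → b j = b' j) :
    Pcond hreg hι lab δ hδθ i b = Pcond hreg hι lab δ hδθ i b' := by
  apply Subtype.ext
  show bigFun (fun j : {j // Rrel δ j i} => b j.1) (fun j : {j // Rrel δ j i} => δ j.1)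
      (fun γ => clip κ (Wsup lab b fun k => Rrel δ k i ∧ δ k = γ)) =
    bigFun (fun j : {j // Rrel δ j i} => b' j.1) (fun j : {j // Rrel δ j i} => δ j.1)
      (fun γ => clip κ (Wsup lab b' fun k => Rrel δ k i ∧ δ k = γ))
  have hg : (fun j : {j // Rrel δ j i} => b j.1) = fun j : {j // Rrel δ j i} => b' j.1 :=
    funext fun j => h j.1 j.2
  have hW : (fun γ => clip κ (Wsup lab b fun k => Rrel δ k i ∧ δ k = γ)) =
      fun γ => clip κ (Wsup lab b' fun k => Rrel δ k i ∧ δ k = γ) := by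
    funext γ
    rw [Wsup_congr lab _ fun k hk => h k hk.1]
  rw [hg, hW]

section Rec

variable (hκ : Cardinal.aleph0 ≤ κ) (hreg : κ.IsRegular)
  {ι : Type u} (hι : Cardinal.mk ι < κ)
  (A : ι → Set (CohenCond κ θ)) (lab : ι → CohenCond κ θ → Ordinal.{u})
  (δ : ι → Ordinal.{u}) (hδθ : ∀ i, δ i < θ)
  (hpredense : ∀ i, ∀ q : CohenCond κ θ, ∃ a ∈ A i, ∃ r, CohenExt r a ∧ CohenExt r q)

/-- one step of the recursion: choose an element of the `i`-th antichain compatible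
with everything constructed so far. -/
def stepF (i : ι) (b : ι → CohenCond κ θ) : CohenCond κ θ :=
  (hpredense i (Pcond hreg hι lab δ hδθ i b)).choose

/-- the recursively chosen elements of the antichains. -/
def aFun : ι → CohenCond κ θ :=
  (Rrel_wf δ).fix fun i ih =>
    stepF hreg hι A lab δ hδθ hpredense i fun j =>
      if h : Rrel δ j i then ih j h else emptyCond hκ

theorem aFun_eq (i : ι) :
    aFun hκ hreg hι A lab δ hδθ hpredense i =
      stepF hreg hι A lab δ hδθ hpredense i fun j =>
        if _ : Rrel δ j i then aFun hκ hreg hι A lab δ hδθ hpredense j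
        else emptyCond hκ := by
  unfold aFun
  exact WellFounded.fix_eq _ _ _

theorem aFun_eq' (i : ι) :
    aFun hκ hreg hι A lab δ hδθ hpredense i =
      (hpredense i (Pcond hreg hι lab δ hδθ i
        (aFun hκ hreg hι A lab δ hδθ hpredense))).choose := by
  rw [aFun_eq]
  unfold stepF
  have hPeq := Pcond_congr hreg hι lab δ hδθ i
    (b := fun j => if _ : Rrel δ j i then aFun hκ hreg hι A lab δ hδθ hpredense j
      else emptyCond hκ)
    (b' := aFun hκ hreg hι A lab δ hδθ hpredense) fun j hj => dif_pos hj
  simp only [hPeq]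

theorem aFun_mem (i : ι) : aFun hκ hreg hι A lab δ hδθ hpredense i ∈ A i := by
  rw [aFun_eq']
  exact (hpredense i _).choose_spec.1

theorem aFun_compat (i : ι) :
    ∀ γ v w, (aFun hκ hreg hι A lab δ hδθ hpredense i).1 γ = some v →
      (Pcond hreg hι lab δ hδθ i (aFun hκ hreg hι A lab δ hδθ hpredense)).1 γ = some w →
      v = w := by
  obtain ⟨r, hr1, hr2⟩ :=
    (hpredense i (Pcond hreg hι lab δ hδθ i
      (aFun hκ hreg hι A lab δ hδθ hpredense))).choose_spec.2
  intro γ v w hv hw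
  rw [aFun_eq'] at hv
  have h1 := hr1 γ v hv
  have h2 := hr2 γ w hw
  rw [h1] at h2
  exact Option.some.inj h2

end Rec

end CohenAux

theorem cohen_suitable_pairs_compatible
    (κ : Cardinal.{u}) (hreg : κ.IsRegular) (hunc : Cardinal.aleph0 < κ)
    (θ : Ordinal.{u}) (hθ : κ.ord < θ)
    -- μ < κ many suitable pairs (x_i, δ_i):
    (ι : Type u) (hι : Cardinal.mk ι < κ)
    (A : ι → Set (CohenCond κ θ)) (lab : ∀ i, CohenCond κ θ → Ordinal.{u})
    (δ : ι → Ordinal.{u}) (hδθ : ∀ i, δ i < θ)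
    -- each x_i is given by a maximal antichain of size ≤ κ:
    (hanti : ∀ i, (A i).Pairwise fun p q => ¬ ∃ r, CohenExt r p ∧ CohenExt r q)
    (hpredense : ∀ i, ∀ q : CohenCond κ θ, ∃ a ∈ A i, ∃ r, CohenExt r a ∧ CohenExt r q)
    (hsize : ∀ i, Cardinal.mk (A i) ≤ Cardinal.lift.{u + 1} κ)
    -- labeled with ordinals < κ:
    (hlab : ∀ i, ∀ a ∈ A i, lab i a < κ.ord)
    -- suitability: δ_i exceeds the supports of all conditions in the antichain:
    (hsupp : ∀ i, ∀ a ∈ A i, ∀ γ : Ordinal.{u}, a.1 γ ≠ none → γ < δ i) :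
    -- then there is a common lower bound q of the b_{x_i,δ_i}:
    ∃ q : CohenCond κ θ, ∀ i : ι, ∃ a ∈ A i, CohenExt q a ∧
      ∃ v : Ordinal.{u}, q.1 (δ i) = some v ∧ lab i a < v := by
  classical
  have hκ : Cardinal.aleph0 ≤ κ := hreg.1
  set a : ι → CohenCond κ θ := aFun hκ hreg hι A lab δ hδθ hpredense with ha
  set P : ι → CohenCond κ θ := fun i => Pcond hreg hι lab δ hδθ i a with hP
  have haA : ∀ i, a i ∈ A i := fun i => aFun_mem hκ hreg hι A lab δ hδθ hpredense i
  have hpc : ∀ i γ v w, (a i).1 γ = some v → (P i).1 γ = some w → v = w :=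
    fun i => aFun_compat hκ hreg hι A lab δ hδθ hpredense i
  have hsuppa : ∀ i γ, (a i).1 γ ≠ none → γ < δ i :=
    fun i γ h => hsupp i (a i) (haA i) γ h
  set Vfin : Ordinal.{u} → Ordinal.{u} := fun γ => Wsup lab a fun k => δ k = γ with hVfin
  have hlim := Cardinal.isSuccLimit_ord hκ
  have hlt1 : ∀ (p : ι → Prop), Wsup lab a p < κ.ord := by
    intro p
    apply Cardinal.iSup_lt_ord_of_isRegular hreg ((Cardinal.mk_subtype_le _).trans_lt hι)
    rintro ⟨k, hk⟩
    have h := hlab k (a k) (haA k)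
    rw [Ordinal.add_one_eq_succ]
    exact hlim.succ_lt h
  have hVfinlt : ∀ γ, Vfin γ < κ.ord := fun γ => hlt1 _
  -- the key compatibility lemma, by induction along `Rrel δ`
  have KEY : ∀ i : ι,
      (∀ γ v, (a i).1 γ = some v → (∃ k, δ k = γ) → v = Vfin γ) ∧
      (∀ j, Rrel δ j i → ∀ γ v w, (a i).1 γ = some v → (a j).1 γ = some w → v = w) := by
    intro i
    refine (Rrel_wf δ).induction
      (C := fun i : ι => (∀ γ v, (a i).1 γ = some v → (∃ k, δ k = γ) → v = Vfin γ) ∧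
        (∀ j, Rrel δ j i → ∀ γ v w, (a i).1 γ = some v → (a j).1 γ = some w → v = w))
      i ?_
    intro i IH
    have part1 : ∀ γ v, (a i).1 γ = some v → (∃ k, δ k = γ) → v = Vfin γ := by
      rintro γ v hv ⟨k, hk⟩
      have hγi : γ < δ i := hsuppa i γ (by rw [hv]; exact Option.some_ne_none v)
      have hki : Rrel δ k i := Rrel_of_lt (by rw [hk]; exact hγi)
      have hass : (P i).1 γ =
          some (clip κ (Wsup lab a fun k' => Rrel δ k' i ∧ δ k' = γ)) := by
        show bigFun (fun j : {j // Rrel δ j i} => a j.1) (fun j : {j // Rrel δ j i} => δ j.1)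
          (fun γ => clip κ (Wsup lab a fun k' => Rrel δ k' i ∧ δ k' = γ)) γ = _
        exact bigFun_assigned _ _ _ ⟨⟨k, hki⟩, hk⟩
      have hveq : v = clip κ (Wsup lab a fun k' => Rrel δ k' i ∧ δ k' = γ) :=
        hpc i γ v _ hv hass
      have hpeq : (fun k' => Rrel δ k' i ∧ δ k' = γ) = fun k' => δ k' = γ := by
        funext k'
        apply propext
        constructor
        · exact And.right
        · intro h
          exact ⟨Rrel_of_lt (by rw [h]; exact hγi), h⟩
      have hWeq : Wsup lab a (fun k' => Rrel δ k' i ∧ δ k' = γ) = Vfin γ :=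
        congrArg (Wsup lab a) hpeq
      rw [hveq, hWeq, clip_eq (hVfinlt γ)]
    refine ⟨part1, ?_⟩
    intro j hji γ v w hv hw
    by_cases hd : ∃ k, δ k = γ
    · rw [part1 γ v hv hd, (IH j hji).1 γ w hw hd]
    · have h2 : ∃ j' : {j' // Rrel δ j' i}, (a j'.1).1 γ ≠ none :=
        ⟨⟨j, hji⟩, by rw [hw]; exact Option.some_ne_none w⟩
      have hnd : ¬∃ k' : {j' // Rrel δ j' i}, δ k'.1 = γ :=
        fun ⟨k', hk'⟩ => hd ⟨k'.1, hk'⟩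
      have hPval : (P i).1 γ = (a h2.choose.1).1 γ := by
        show bigFun (fun j : {j // Rrel δ j i} => a j.1) (fun j : {j // Rrel δ j i} => δ j.1)
          (fun γ => clip κ (Wsup lab a fun k' => Rrel δ k' i ∧ δ k' = γ)) γ = _
        exact bigFun_of_g _ _ _ hnd h2
      obtain ⟨w0, hw0⟩ := Option.ne_none_iff_exists'.1 h2.choose_spec
      have hvw0 : v = w0 := hpc i γ v w0 hv (hPval.trans hw0)
      rcases eq_or_ne h2.choose.1 j with hje | hjne
      · rw [hje] at hw0
        rw [hw] at hw0
        exact hvw0.trans (Option.some.inj hw0).symm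
      · rcases Rrel_total δ h2.choose.1 j hjne with hc | hc
        · exact hvw0.trans ((IH j hji).2 _ hc γ w w0 hw hw0).symm
        · exact hvw0.trans ((IH _ h2.choose.2).2 j hc γ w0 w hw0 hw)
  refine ⟨bigCond hreg hι a δ hδθ Vfin hVfinlt, ?_⟩
  intro i
  refine ⟨a i, haA i, ?_, Vfin (δ i), ?_, ?_⟩
  · intro γ v hv
    by_cases hd : ∃ k, δ k = γ
    · have hveq := (KEY i).1 γ v hv hd
      have : (bigCond hreg hι a δ hδθ Vfin hVfinlt).1 γ = some (Vfin γ) :=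
        bigFun_assigned _ _ _ hd
      rw [this, hveq]
    · have h2 : ∃ j, (a j).1 γ ≠ none := ⟨i, by rw [hv]; exact Option.some_ne_none v⟩
      have hq : (bigCond hreg hι a δ hδθ Vfin hVfinlt).1 γ = (a h2.choose).1 γ :=
        bigFun_of_g _ _ _ hd h2
      obtain ⟨w0, hw0⟩ := Option.ne_none_iff_exists'.1 h2.choose_spec
      rcases eq_or_ne h2.choose i with hje | hjne
      · rw [hq, hje, hv]
      · rcases Rrel_total δ h2.choose i hjne with hc | hc
        · rw [hq, hw0, ← (KEY i).2 _ hc γ v w0 hv hw0]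
        · rw [hq, hw0, (KEY h2.choose).2 i hc γ w0 v hw0 hv]
  · exact bigFun_assigned _ _ _ ⟨i, rfl⟩
  · have hle : lab i (a i) + 1 ≤ Vfin (δ i) :=
      Ordinal.le_iSup (fun k : {k // δ k = δ i} => lab k.1 (a k.1) + 1) ⟨i, rfl⟩
    refine lt_of_lt_of_le ?_ hle
    rw [Ordinal.add_one_eq_succ]
    exact Order.lt_succ_of_not_isMax (not_isMax _)
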